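/- arXiv:1506.08961 — 9 statements merged into one kernel-verified Lean document; each statement's English description precedes it below -/
import Mathlib

section
/- Let H be a normalized generalized Hadamard matrix H(q,λ) over 𝔽_q. Then rank(C_H) = rank(F_H) + 1 and ker(C_H) = ker(F_H) + 1. -/
open Finset

/-- `H` is a generalized Hadamard matrix with parameter `lam`: for every pair of
distinct rows, the multiset of coordinatewise differences contains every element
of `F` exactly `lam` times. -/
def IsGH {F : Type*} [Fintype F] [DecidableEq F] [Sub F]
    {ι : Type*} [Fintype ι] (lam : ℕ) (H : Matrix ι ι F) : Prop :=
  ∀ i j : ι, i ≠ j → ∀ a : F,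
    (Finset.univ.filter (fun s => H i s - H j s = a)).card = lam

/-- A matrix is normalized if its first row and first column are all zeros. -/
def Normalized {F : Type*} [Zero F] {n : ℕ} (H : Matrix (Fin n) (Fin n) F) : Prop :=
  ∀ i s : Fin n, (i.val = 0 ∨ s.val = 0) → H i s = 0

/-- The code `F_H` whose codewords are the rows of `H`. -/
def rowSet {F ι : Type*} (H : Matrix ι ι F) : Set (ι → F) :=
  Set.range (fun i => H i)

/-- The GH code `C_H = ⋃_{α ∈ F} (F_H + α·𝟏)`. -/
def ghCode {F ι : Type*} [Add F] (H : Matrix ι ι F) : Set (ι → F) :=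
  {v | ∃ (α : F) (i : ι), v = fun s => H i s + α}

/-- The rank of a code: the dimension of its linear span. -/
noncomputable def rankC {F ι : Type*} [Field F] (C : Set (ι → F)) : ℕ :=
  Module.finrank F (Submodule.span F C)

/-- The kernel `K(C) = {x : αx + C = C for all α}` of a code. -/
def kerSet {F ι : Type*} [Mul F] [Add F] (C : Set (ι → F)) : Set (ι → F) :=
  {x | ∀ α : F, (fun c => (fun i => α * x i) + c) '' C = C}

/-- The dimension of the kernel of a code. -/
noncomputable def kerDim {F ι : Type*} [Field F] (C : Set (ι → F)) : ℕ :=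
  Module.finrank F (Submodule.span F (kerSet C))

/-- The `p`-kernel `K_p(C) = {x : x + C = C}` of a code. -/
def pKerSet {F ι : Type*} [Add F] (C : Set (ι → F)) : Set (ι → F) :=
  {x | (fun c => x + c) '' C = C}

/-- The Euclidean orthogonal code `C^⊥`. -/
def dualSet {F ι : Type*} [CommRing F] [Fintype ι] (C : Set (ι → F)) : Set (ι → F) :=
  {v | ∀ w ∈ C, ∑ i, v i * w i = 0}

/-- Two matrices are translation equivalent if the rows of one are obtained from the
rows of the other by adding a fixed vector. -/
def TransEquiv {F ι : Type*} [Add F] (B B' : Matrix ι ι F) : Prop :=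
  ∃ v : ι → F, rowSet B' = (fun b => v + b) '' rowSet B

/-- The Kronecker sum `H₁ ⊕ H₂`. -/
def kroneckerSum {F ι κ : Type*} [Add F] (H₁ : Matrix ι ι F) (H₂ : Matrix κ κ F) :
    Matrix (ι × κ) (ι × κ) F :=
  fun p r => H₁ p.1 r.1 + H₂ p.2 r.2

/-- The Kronecker sum `H₁ ⊕ [B₁, …, Bₙ]`, whose `(i,j)` block is `h_{ij} + B_i`. -/
def kroneckerSumFam {F ι κ : Type*} [Add F] (H₁ : Matrix ι ι F) (B : ι → Matrix κ κ F) :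
    Matrix (ι × κ) (ι × κ) F :=
  fun p r => H₁ p.1 r.1 + B p.1 p.2 r.2

/-- The multiplicative-table matrix `S_q` of a field. -/
def mulTable (F : Type*) [Mul F] : Matrix F F F := fun i j => i * j

/-- A code is `K`-additive, for a subfield `K`, if it is a linear space over `K`. -/
def IsAdditiveOver {F ι : Type*} [Field F] (K : Subfield F) (C : Set (ι → F)) : Prop :=
  (0 : ι → F) ∈ C ∧ (∀ x ∈ C, ∀ y ∈ C, x + y ∈ C) ∧
    ∀ (a : K), ∀ x ∈ C, (fun i => (a : F) * x i) ∈ C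

lemma aux_finrank_sup_singleton {F : Type*} [Field F] {ι : Type*} [Fintype ι]
    (W : Submodule F (ι → F)) (v : ι → F) (hv : v ∉ W) :
    Module.finrank F ↥(W ⊔ Submodule.span F {v}) = Module.finrank F W + 1 := by
  have hv0 : v ≠ 0 := fun h => hv (h ▸ W.zero_mem)
  have hinf : W ⊓ Submodule.span F {v} = ⊥ := by
    rw [eq_bot_iff]
    intro x hx
    rw [Submodule.mem_inf] at hx
    obtain ⟨hxW, hxv⟩ := hx
    rw [Submodule.mem_span_singleton] at hxv
    obtain ⟨c, rfl⟩ := hxv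
    rcases eq_or_ne c 0 with rfl | hc
    · simp
    · exact absurd (by simpa [inv_smul_smul₀ hc] using W.smul_mem c⁻¹ hxW) hv
  have h := Submodule.finrank_sup_add_finrank_inf_eq W (Submodule.span F {v})
  rw [hinf, finrank_span_singleton hv0, finrank_bot, add_zero] at h
  exact h

theorem stmt0 {q lam : ℕ} {F : Type*} [Field F] [Fintype F] [DecidableEq F]
    (hcard : Fintype.card F = q) (hlam : 0 < lam)
    (H : Matrix (Fin (q * lam)) (Fin (q * lam)) F)
    (hGH : IsGH lam H) (hnorm : Normalized H) :
    rankC (ghCode H) = rankC (rowSet H) + 1 ∧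
    kerDim (ghCode H) = kerDim (rowSet H) + 1 := by
  classical
  have hq : 0 < q := hcard ▸ Fintype.card_pos
  have hn : 0 < q * lam := Nat.mul_pos hq hlam
  set e0 : Fin (q * lam) := ⟨0, hn⟩ with he0
  have hcol : ∀ i, H i e0 = 0 := fun i => hnorm i e0 (Or.inr rfl)
  have hRzero : (0 : Fin (q * lam) → F) ∈ rowSet H :=
    ⟨e0, funext fun s => hnorm e0 s (Or.inl rfl)⟩
  have hRC : rowSet H ⊆ ghCode H := by
    rintro v ⟨i, rfl⟩
    exact ⟨0, i, funext fun s => (add_zero _).symm⟩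
  have honeC : (1 : Fin (q * lam) → F) ∈ ghCode H := by
    refine ⟨1, e0, funext fun s => ?_⟩
    have := hnorm e0 s (Or.inl rfl)
    simp [this]
  have hCe0 : ∀ v ∈ ghCode H, v e0 = 0 → v ∈ rowSet H := by
    rintro v ⟨α, i, rfl⟩ h0
    have hα : α = 0 := by simpa [hcol i] using h0
    exact ⟨i, by funext s; simp [hα]⟩
  have hspanR : ∀ v ∈ Submodule.span F (rowSet H), v e0 = 0 := by
    intro v hv
    have hle : Submodule.span F (rowSet H) ≤
        LinearMap.ker (LinearMap.proj e0 : (Fin (q * lam) → F) →ₗ[F] F) := by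
      rw [Submodule.span_le]
      rintro w ⟨i, rfl⟩
      simpa using hcol i
    simpa using hle hv
  have honene : (1 : Fin (q * lam) → F) ∉ Submodule.span F (rowSet H) := by
    intro h
    have := hspanR _ h
    simp at this
  -- rank part
  have hspanC : Submodule.span F (ghCode H) =
      Submodule.span F (rowSet H) ⊔ Submodule.span F {(1 : Fin (q * lam) → F)} := by
    apply le_antisymm
    · rw [Submodule.span_le]
      rintro v ⟨α, i, rfl⟩
      have h1 : (fun s => H i s + α) =
          (fun s => H i s) + α • (1 : Fin (q * lam) → F) := by
        funext s; simp
      rw [h1]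
      exact Submodule.add_mem _
        (Submodule.mem_sup_left (Submodule.subset_span ⟨i, rfl⟩))
        (Submodule.mem_sup_right
          (Submodule.smul_mem _ _ (Submodule.mem_span_singleton_self _)))
    · exact sup_le (Submodule.span_mono hRC)
        (Submodule.span_le.mpr (Set.singleton_subset_iff.mpr (Submodule.subset_span honeC)))
  -- kernel part
  have hCmem : ∀ (x : Fin (q * lam) → F), x ∈ kerSet (ghCode H) →
      ∀ (α : F), ∀ v ∈ ghCode H, (fun i => α * x i) + v ∈ ghCode H := by
    intro x hx α v hv
    rw [← hx α]
    exact ⟨v, hv, rfl⟩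
  have hCconst : ∀ (β : F), ∀ v ∈ ghCode H, (fun _ : Fin (q * lam) => β) + v ∈ ghCode H := by
    rintro β v ⟨α, i, rfl⟩
    refine ⟨α + β, i, funext fun s => ?_⟩
    simp only [Pi.add_apply]
    ring
  have hker1 : (1 : Fin (q * lam) → F) ∈ kerSet (ghCode H) := by
    intro α
    apply Set.Subset.antisymm
    · rintro _ ⟨v, hv, rfl⟩
      refine Set.mem_of_eq_of_mem ?_ (hCconst α v hv)
      funext i; simp
    · intro v hv
      refine ⟨(fun _ : Fin (q * lam) => -α) + v, hCconst (-α) v hv, ?_⟩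
      show (fun i => α * (1 : Fin (q * lam) → F) i) + _ = v
      funext i
      simp only [Pi.add_apply, Pi.one_apply]
      ring
  have hKRC : kerSet (rowSet H) ⊆ kerSet (ghCode H) := by
    intro x hx α
    have hR := hx α
    apply Set.Subset.antisymm
    · rintro _ ⟨v, ⟨β, i, rfl⟩, rfl⟩
      have hm : (fun s => α * x s) + (fun s => H i s) ∈ rowSet H := by
        rw [← hR]
        exact ⟨fun s => H i s, ⟨i, rfl⟩, rfl⟩
      obtain ⟨j, hj⟩ := hm
      refine ⟨β, j, funext fun s => ?_⟩
      have hjs : H j s = α * x s + H i s := congrFun hj s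
      show α * x s + (H i s + β) = H j s + β
      rw [hjs]
      ring
    · rintro _ ⟨β, i, rfl⟩
      have hm : (fun s => H i s) ∈ (fun c => (fun i => α * x i) + c) '' rowSet H := by
        rw [hR]; exact ⟨i, rfl⟩
      obtain ⟨r, ⟨j, rfl⟩, hr⟩ := hm
      refine ⟨fun s => H j s + β, ⟨β, j, rfl⟩, funext fun s => ?_⟩
      have hrs : α * x s + H j s = H i s := congrFun hr s
      show α * x s + (H j s + β) = H i s + β
      rw [← hrs]
      ring
  have hRfin : (rowSet H).Finite := Set.finite_range _
  have hkey : ∀ x ∈ kerSet (ghCode H),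
      x - x e0 • (1 : Fin (q * lam) → F) ∈ kerSet (rowSet H) := by
    intro x hx α
    set y : Fin (q * lam) → F := x - x e0 • 1 with hy
    have himg : (fun c => (fun i => α * y i) + c) '' rowSet H ⊆ rowSet H := by
      rintro _ ⟨r, hrR, rfl⟩
      apply hCe0
      · have h1 : (fun i => α * x i) + r ∈ ghCode H := hCmem x hx α r (hRC hrR)
        have h2 := hCconst (-(α * x e0)) _ h1
        refine Set.mem_of_eq_of_mem ?_ h2
        show (fun i => α * y i) + r = _
        funext i
        simp only [Pi.add_apply, hy, Pi.sub_apply, Pi.smul_apply, Pi.one_apply, smul_eq_mul]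
        ring
      · obtain ⟨j, hj⟩ := hrR
        show ((fun i => α * y i) + r) e0 = 0
        simp only [Pi.add_apply, hy, Pi.sub_apply, Pi.smul_apply, Pi.one_apply, smul_eq_mul,
          ← hj, hcol j]
        ring
    have hinj : Function.Injective (fun c : Fin (q * lam) → F => (fun i => α * y i) + c) :=
      fun a b hab => by simpa using congrArg (fun z => -(fun i => α * y i) + z) hab
    have hcard : ((fun c => (fun i => α * y i) + c) '' rowSet H).ncard = (rowSet H).ncard :=
      Set.ncard_image_of_injective _ hinj
    exact Set.eq_of_subset_of_ncard_le himg (le_of_eq hcard.symm) hRfin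
  have hKR0 : ∀ x ∈ kerSet (rowSet H), x e0 = 0 := by
    intro x hx
    have h1 := hx 1
    have hm : (fun i => (1 : F) * x i) + (0 : Fin (q * lam) → F) ∈ rowSet H := by
      rw [← h1]
      exact ⟨0, hRzero, rfl⟩
    obtain ⟨j, hj⟩ := hm
    have := congrFun hj e0
    simp only [Pi.add_apply, Pi.zero_apply, one_mul, add_zero, hcol j] at this
    exact this.symm
  have honeneK : (1 : Fin (q * lam) → F) ∉ Submodule.span F (kerSet (rowSet H)) := by
    intro h
    have hle : Submodule.span F (kerSet (rowSet H)) ≤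
        LinearMap.ker (LinearMap.proj e0 : (Fin (q * lam) → F) →ₗ[F] F) := by
      rw [Submodule.span_le]
      intro w hw
      simpa using hKR0 w hw
    have := hle h
    simp at this
  have hspanK : Submodule.span F (kerSet (ghCode H)) =
      Submodule.span F (kerSet (rowSet H)) ⊔ Submodule.span F {(1 : Fin (q * lam) → F)} := by
    apply le_antisymm
    · rw [Submodule.span_le]
      intro x hx
      have hy := hkey x hx
      have hxeq : x = (x - x e0 • 1) + x e0 • (1 : Fin (q * lam) → F) := by
        rw [sub_add_cancel]
      rw [hxeq]
      exact Submodule.add_mem _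
        (Submodule.mem_sup_left (Submodule.subset_span hy))
        (Submodule.mem_sup_right
          (Submodule.smul_mem _ _ (Submodule.mem_span_singleton_self _)))
    · exact sup_le (Submodule.span_mono hKRC)
        (Submodule.span_le.mpr (Set.singleton_subset_iff.mpr (Submodule.subset_span hker1)))
  constructor
  · unfold rankC
    rw [hspanC, aux_finrank_sup_singleton _ _ honene]
  · unfold kerDim
    rw [hspanK, aux_finrank_sup_singleton _ _ honeneK]
end

section
/- Let H be a normalized generalized Hadamard matrix over a finite commutative ring R that is not a field. Then the kernel K(F_H) = {x ∈ R^n : αx + F_H = F_H for all α ∈ R} is trivial, i.e., K(F_H) = {0}. -/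
open Finset

theorem stmt1 {lam : ℕ} {R : Type*} [CommRing R] [Fintype R] [DecidableEq R]
    (hnf : ¬ IsField R) (hlam : 0 < lam)
    (H : Matrix (Fin (Fintype.card R * lam)) (Fin (Fintype.card R * lam)) R)
    (hGH : IsGH lam H) (hnorm : Normalized H) :
    kerSet (rowSet H) = {0} := by
  have hn : 0 < Fintype.card R * lam := Nat.mul_pos Fintype.card_pos hlam
  let z : Fin (Fintype.card R * lam) := ⟨0, hn⟩
  have hz : ∀ s, H z s = 0 := fun s => hnorm z s (Or.inl rfl)
  have h0mem : (0 : Fin (Fintype.card R * lam) → R) ∈ rowSet H := ⟨z, funext fun s => (hz s)⟩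
  have hrow : ∀ j : Fin (Fintype.card R * lam), j ≠ z → ∀ c : R,
      (univ.filter fun s => H j s = c).card = lam := by
    intro j hj c
    have := hGH j z hj c
    simpa [hz] using this
  ext x
  simp only [Set.mem_singleton_iff]
  constructor
  · intro hx
    by_cases hT : Nontrivial R
    · obtain ⟨a, ha, b, hb, hab⟩ : ∃ a : R, a ≠ 0 ∧ ∃ b : R, b ≠ 0 ∧ b * a = 0 := by
        by_contra h
        push_neg at h
        apply hnf
        refine ⟨exists_pair_ne R, mul_comm, ?_⟩
        intro c hc
        have hinj : Function.Injective (fun y : R => c * y) := by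
          intro y1 y2 hy
          by_contra hne
          have h1 : y1 - y2 ≠ 0 := sub_ne_zero_of_ne hne
          have h2 : (y1 - y2) * c = 0 := by
            simp only at hy
            rw [sub_mul, mul_comm y1 c, mul_comm y2 c, hy, sub_self]
          exact h c hc (y1 - y2) h1 h2
        have hsurj := Finite.injective_iff_surjective.mp hinj
        obtain ⟨d, hd⟩ := hsurj 1
        exact ⟨d, hd⟩
      have hxmem : x ∈ rowSet H := by
        rw [← hx 1]
        refine ⟨0, h0mem, ?_⟩
        funext s; simp
      obtain ⟨i, hi⟩ := hxmem
      have hi' : ∀ s, H i s = x s := fun s => congrFun hi s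
      have hbx : (fun s => b * x s) ∈ rowSet H := by
        rw [← hx b]
        refine ⟨0, h0mem, ?_⟩
        funext s; simp
      obtain ⟨j, hj⟩ := hbx
      have hj' : ∀ s, H j s = b * x s := fun s => congrFun hj s
      by_cases hiz : i = z
      · rw [← hi, hiz]; funext s; exact hz s
      · exfalso
        have hS0 : (univ.filter fun s => x s = 0).card = lam := by
          have := hrow i hiz 0; simpa [hi'] using this
        have hSa : (univ.filter fun s => x s = a).card = lam := by
          have := hrow i hiz a; simpa [hi'] using this
        have hjz : j = z := by
          by_contra hjz
          have hl : (univ.filter fun s => b * x s = 0).card = lam := by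
            have := hrow j hjz 0; simpa [hj'] using this
          have hdisj : Disjoint (univ.filter fun s => x s = 0)
              (univ.filter fun s => x s = a) := by
            simp only [Finset.disjoint_filter]
            intro s _ h0 hA
            exact ha (by rw [← hA, h0])
          have hsub : (univ.filter fun s => x s = 0) ∪
              (univ.filter fun s => x s = a) ⊆
              (univ.filter fun s => b * x s = 0) := by
            intro s hs
            simp only [Finset.mem_union, Finset.mem_filter] at hs ⊢
            rcases hs with ⟨_, h0⟩ | ⟨_, hA⟩
            · exact ⟨Finset.mem_univ s, by rw [h0, mul_zero]⟩
            · exact ⟨Finset.mem_univ s, by rw [hA, hab]⟩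
          have hcard : 2 * lam ≤ (univ.filter fun s => b * x s = 0).card := by
            calc 2 * lam = (univ.filter fun s => x s = 0).card +
                (univ.filter fun s => x s = a).card := by rw [hS0, hSa]; ring
            _ = ((univ.filter fun s => x s = 0) ∪
                (univ.filter fun s => x s = a)).card :=
                (Finset.card_union_of_disjoint hdisj).symm
            _ ≤ _ := Finset.card_le_card hsub
          rw [hl] at hcard
          omega
        have hbz : ∀ s, b * x s = 0 := by
          intro s
          rw [← hj' s, hjz]
          exact hz s
        have h1 : (univ.filter fun s => x s = 1).card = lam := by
          have := hrow i hiz 1; simpa [hi'] using this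
        have hne : (univ.filter fun s => x s = 1).Nonempty := by
          rw [← Finset.card_pos, h1]; exact hlam
        obtain ⟨s, hs⟩ := hne
        rw [Finset.mem_filter] at hs
        have := hbz s
        rw [hs.2, mul_one] at this
        exact hb this
    · have : Subsingleton R := not_nontrivial_iff_subsingleton.mp hT
      funext s; exact Subsingleton.elim _ _
  · rintro rfl
    intro α
    have heq : (fun c => (fun i => α * (0 : Fin (Fintype.card R * lam) → R) i) + c) = id := by
      funext c; funext s; simp
    rw [heq, Set.image_id]
end

section
/- Let H₁ and H₂ be two generalized Hadamard matrices over 𝔽_q with H = H₁ ⊕ H₂, and let K be a subfield of 𝔽_q. If C_{H₁} and C_{H₂} are K-additive, then C_H is also K-additive and dim_K(C_H) = dim_K(C_{H₁}) + dim_K(C_{H₂}) − 1, equivalently |C_H| = |C_{H₁}|·|C_{H₂}|/q. -/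
open Finset

section Aux

variable {F : Type*} [Field F] {ι κ : Type*}

lemma row_mem_ghCode (H : Matrix ι ι F) (i : ι) : H i ∈ ghCode H :=
  ⟨0, i, by funext s; simp⟩

/-- No two distinct rows differ by a constant. -/
def NoConstDiff (H : Matrix ι ι F) : Prop :=
  ∀ i j : ι, i ≠ j → ∀ c : F, ∃ s, H i s - H j s ≠ c

lemma noConstDiff_of_isGH [Fintype F] [DecidableEq F] [Fintype ι]
    {lam : ℕ} (hlam : 0 < lam) {H : Matrix ι ι F} (h : IsGH lam H) :
    NoConstDiff H := by
  intro i j hij c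
  by_contra hc
  push_neg at hc
  obtain ⟨a, ha⟩ := exists_ne (c : F)
  have hcard := h i j hij a
  have hemp : (Finset.univ.filter (fun s => H i s - H j s = a)) = ∅ := by
    apply Finset.filter_eq_empty_iff.mpr
    intro s _
    rw [hc s]
    intro h'
    exact ha h'.symm
  rw [hemp] at hcard
  simp at hcard
  omega

lemma card_ghCode [Fintype F] [Fintype ι] [Nonempty ι]
    {H : Matrix ι ι F} (h : NoConstDiff H) :
    Nat.card (ghCode H) = Fintype.card F * Fintype.card ι := by
  have hinj : Function.Injective (fun p : F × ι => (fun s => H p.2 s + p.1 : ι → F)) := by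
    rintro ⟨α, i⟩ ⟨β, j⟩ heq
    simp only at heq
    by_cases hij : i = j
    · subst hij
      obtain ⟨s⟩ := ‹Nonempty ι›
      have h0 := congrFun heq s
      simp only [add_right_inj] at h0
      simp [h0]
    · exfalso
      obtain ⟨s, hs⟩ := h i j hij (β - α)
      have h0 := congrFun heq s
      apply hs
      linear_combination h0
  have hset : ghCode H = Set.range (fun p : F × ι => (fun s => H p.2 s + p.1 : ι → F)) := by
    ext v
    constructor
    · rintro ⟨α, i, rfl⟩; exact ⟨(α, i), rfl⟩
    · rintro ⟨⟨α, i⟩, rfl⟩; exact ⟨α, i, rfl⟩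
  rw [hset, Nat.card_range_of_injective hinj, Nat.card_eq_fintype_card,
    Fintype.card_prod]

lemma noConstDiff_kron [Nonempty ι] [Nonempty κ]
    {H₁ : Matrix ι ι F} {H₂ : Matrix κ κ F}
    (h₁ : NoConstDiff H₁) (h₂ : NoConstDiff H₂) :
    NoConstDiff (kroneckerSum H₁ H₂) := by
  rintro ⟨i₁, i₂⟩ ⟨j₁, j₂⟩ hij c
  by_cases h : i₁ = j₁
  · subst h
    have hne : i₂ ≠ j₂ := fun h' => hij (by rw [h'])
    obtain ⟨s₁⟩ := ‹Nonempty ι›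
    obtain ⟨s₂, hs₂⟩ := h₂ i₂ j₂ hne c
    refine ⟨(s₁, s₂), fun hc => hs₂ ?_⟩
    simp only [kroneckerSum] at hc
    linear_combination hc
  · obtain ⟨s₂⟩ := ‹Nonempty κ›
    obtain ⟨s₁, hs₁⟩ := h₁ i₁ j₁ h (c - (H₂ i₂ s₂ - H₂ j₂ s₂))
    refine ⟨(s₁, s₂), fun hc => hs₁ ?_⟩
    simp only [kroneckerSum] at hc
    linear_combination hc

end Aux

theorem stmt3 {q lam mu : ℕ} {F : Type*} [Field F] [Fintype F] [DecidableEq F]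
    (hcard : Fintype.card F = q) (hlam : 0 < lam) (hmu : 0 < mu)
    (K : Subfield F)
    (H₁ : Matrix (Fin (q * lam)) (Fin (q * lam)) F)
    (H₂ : Matrix (Fin (q * mu)) (Fin (q * mu)) F)
    (h₁ : IsGH lam H₁) (h₂ : IsGH mu H₂)
    (hK₁ : IsAdditiveOver K (ghCode H₁)) (hK₂ : IsAdditiveOver K (ghCode H₂)) :
    IsAdditiveOver K (ghCode (kroneckerSum H₁ H₂)) ∧
    Nat.card (ghCode (kroneckerSum H₁ H₂)) * q =
      Nat.card (ghCode H₁) * Nat.card (ghCode H₂) := by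
  constructor
  · -- Additivity
    refine ⟨?_, ?_, ?_⟩
    · obtain ⟨α₁, i₀, h01⟩ := hK₁.1
      obtain ⟨α₂, j₀, h02⟩ := hK₂.1
      refine ⟨α₁ + α₂, (i₀, j₀), ?_⟩
      funext r
      have e1 := congrFun h01 r.1
      have e2 := congrFun h02 r.2
      simp only [Pi.zero_apply] at e1 e2
      simp only [kroneckerSum, Pi.zero_apply]
      linear_combination e1 + e2
    · rintro x ⟨α, ⟨i, j⟩, rfl⟩ y ⟨β, ⟨i', j'⟩, rfl⟩
      obtain ⟨γ, i'', hg⟩ := hK₁.2.1 _ (row_mem_ghCode H₁ i) _ (row_mem_ghCode H₁ i')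
      obtain ⟨δ, j'', hd⟩ := hK₂.2.1 _ (row_mem_ghCode H₂ j) _ (row_mem_ghCode H₂ j')
      refine ⟨γ + δ + α + β, (i'', j''), ?_⟩
      funext r
      have e1 := congrFun hg r.1
      have e2 := congrFun hd r.2
      simp only [Pi.add_apply] at e1 e2
      simp only [kroneckerSum, Pi.add_apply]
      linear_combination e1 + e2
    · rintro a x ⟨α, ⟨i, j⟩, rfl⟩
      obtain ⟨γ, i', hg⟩ := hK₁.2.2 a _ (row_mem_ghCode H₁ i)
      obtain ⟨δ, j', hd⟩ := hK₂.2.2 a _ (row_mem_ghCode H₂ j)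
      refine ⟨γ + δ + (a : F) * α, (i', j'), ?_⟩
      funext r
      have e1 := congrFun hg r.1
      have e2 := congrFun hd r.2
      simp only [kroneckerSum]
      linear_combination e1 + e2
  · -- Cardinality
    have hq2 : 2 ≤ q := hcard ▸ Fintype.one_lt_card
    have hne1 : Nonempty (Fin (q * lam)) := ⟨⟨0, by positivity⟩⟩
    have hne2 : Nonempty (Fin (q * mu)) := ⟨⟨0, by positivity⟩⟩
    have n1 := noConstDiff_of_isGH hlam h₁
    have n2 := noConstDiff_of_isGH hmu h₂
    have c1 := card_ghCode n1
    have c2 := card_ghCode n2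
    have ck := card_ghCode (noConstDiff_kron n1 n2)
    rw [ck, c1, c2, hcard]
    simp only [Fintype.card_prod, Fintype.card_fin]
    ring
end

section
/- Let H(q,λ) be a normalized generalized Hadamard matrix over 𝔽_q, where q = p^e, p prime, and write n = qλ = p^t·s with gcd(p,s) = 1. Then 1 ≤ ker(C_H) ≤ ker_p(C_H) ≤ 1 + t/e. -/
open Finset

section Aux

variable {F ι : Type*} [Field F]

/-- Adding a constant to a codeword of the GH code stays in the code. -/
lemma ghCode_shift_mem (H : Matrix ι ι F) (β : F) {c : ι → F} (hc : c ∈ ghCode H) :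
    (fun _ => β) + c ∈ ghCode H := by
  obtain ⟨α, i, rfl⟩ := hc
  exact ⟨β + α, i, by funext s; simp [Pi.add_apply]; ring⟩

lemma ghCode_shift_image (H : Matrix ι ι F) (β : F) :
    (fun c => (fun _ => β) + c) '' ghCode H = ghCode H := by
  apply Set.Subset.antisymm
  · rintro _ ⟨c, hc, rfl⟩
    exact ghCode_shift_mem H β hc
  · intro x hx
    refine ⟨(fun _ => -β) + x, ghCode_shift_mem H (-β) hx, ?_⟩
    funext s; simp

/-- The kernel of a code is an `F`-linear subspace. -/
def kerSubmodule (C : Set (ι → F)) : Submodule F (ι → F) where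
  carrier := kerSet C
  zero_mem' := by
    intro α
    have : (fun c : ι → F => (fun i => α * (0 : ι → F) i) + c) = id := by
      funext c; funext i; simp
    rw [this, Set.image_id]
  add_mem' := by
    intro x y hx hy α
    have h1 : (fun c : ι → F => (fun i => α * (x + y) i) + c)
        = (fun c => (fun i => α * x i) + c) ∘ (fun c => (fun i => α * y i) + c) := by
      funext c; funext i
      simp [Pi.add_apply, mul_add]; ring
    rw [h1, Set.image_comp, hy α, hx α]
  smul_mem' := by
    intro β x hx α
    have h1 : (fun c : ι → F => (fun i => α * (β • x) i) + c)
        = (fun c => (fun i => (α * β) * x i) + c) := by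
      funext c; funext i; simp [Pi.smul_apply]; ring
    rw [h1]
    exact hx (α * β)

/-- The p-kernel of a code is an additive subgroup. -/
def pKerAddSubgroup (C : Set (ι → F)) : AddSubgroup (ι → F) where
  carrier := pKerSet C
  zero_mem' := by
    show (fun c : ι → F => 0 + c) '' C = C
    have : (fun c : ι → F => 0 + c) = id := by funext c; simp
    rw [this, Set.image_id]
  add_mem' := by
    intro x y hx hy
    show (fun c : ι → F => (x + y) + c) '' C = C
    have h1 : (fun c : ι → F => (x + y) + c)
        = (fun c => x + c) ∘ (fun c => y + c) := by
      funext c; rw [Function.comp_apply, add_assoc]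
    rw [h1, Set.image_comp, hy, hx]
  neg_mem' := by
    intro x hx
    show (fun c : ι → F => -x + c) '' C = C
    calc (fun c : ι → F => -x + c) '' C
        = (fun c : ι → F => -x + c) '' ((fun c => x + c) '' C) := by rw [hx]
      _ = (fun c : ι → F => (-x + (x + c))) '' C := by
          rw [← Set.image_comp]; rfl
      _ = C := by
          have : (fun c : ι → F => -x + (x + c)) = id := by
            funext c; simp
          rw [this, Set.image_id]

lemma kerSet_subset_pKerSet (C : Set (ι → F)) : kerSet C ⊆ pKerSet C := by
  intro x hx
  have h := hx 1
  have h1 : (fun i => (1:F) * x i) = x := by funext i; rw [one_mul]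
  rw [h1] at h
  exact h

end Aux

lemma exists_card_pow_aux {p : ℕ} (hp : p.Prime) {M : Type*} [AddCommGroup M] [Finite M]
    [Module (ZMod p) M] (A : AddSubgroup M) : ∃ d, Nat.card A = p ^ d := by
  haveI : NeZero p := ⟨hp.ne_zero⟩
  haveI : Fact p.Prime := ⟨hp⟩
  let P' : Submodule (ZMod p) M := AddSubgroup.toZModSubmodule p A
  haveI : Fintype P' := Fintype.ofFinite _
  refine ⟨Module.finrank (ZMod p) P', ?_⟩
  have h1 : Nat.card A = Nat.card P' :=
    Nat.card_congr ⟨fun x => ⟨x.1, x.2⟩, fun x => ⟨x.1, x.2⟩, fun _ => rfl, fun _ => rfl⟩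
  rw [h1, Nat.card_eq_fintype_card, Module.card_eq_pow_finrank (K := ZMod p), ZMod.card]

theorem stmt6 {p e t s lam : ℕ} {F : Type*} [Field F] [Fintype F] [DecidableEq F]
    (hp : p.Prime) (hcard : Fintype.card F = p ^ e) (hlam : 0 < lam)
    (hn : p ^ e * lam = p ^ t * s) (hps : Nat.Coprime p s)
    (H : Matrix (Fin (p ^ e * lam)) (Fin (p ^ e * lam)) F)
    (hGH : IsGH lam H) (hnorm : Normalized H) :
    1 ≤ kerDim (ghCode H) ∧
    ∃ d : ℕ, Nat.card (pKerSet (ghCode H)) = p ^ d ∧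
      e * kerDim (ghCode H) ≤ d ∧ d ≤ e + t := by
  classical
  have hppos : 0 < p := hp.pos
  have hnpos : 0 < p ^ e * lam := Nat.mul_pos (pow_pos hppos e) hlam
  have hq2 : 1 < Fintype.card F := Fintype.one_lt_card
  -- characteristic of F is p
  have hcharp : CharP F p := by
    obtain ⟨r, hr, hcardr⟩ := FiniteField.card F (ringChar F)
    have hpr : p = ringChar F := by
      have hdvd : ringChar F ∣ p ^ e := by
        rw [← hcard, hcardr]
        exact dvd_pow_self _ (by positivity)
      have := (Nat.Prime.dvd_of_dvd_pow hr hdvd)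
      exact ((Nat.prime_dvd_prime_iff_eq hr hp).mp this).symm
    rw [hpr]; exact ringChar.charP F
  haveI := hcharp
  haveI : NeZero p := ⟨hp.ne_zero⟩
  -- Part 1 : 1 ≤ kerDim (ghCode H)
  have hone_mem : (1 : Fin (p ^ e * lam) → F) ∈ kerSet (ghCode H) := by
    intro α
    have h1 : (fun i => α * (1 : Fin (p ^ e * lam) → F) i) = (fun _ => α) := by
      funext i; simp
    rw [h1]
    exact ghCode_shift_image H α
  have hker_eq : kerDim (ghCode H) = Module.finrank F (kerSubmodule (ghCode H)) := by
    unfold kerDim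
    have : kerSet (ghCode H) = ↑(kerSubmodule (ghCode H)) := rfl
    rw [this, Submodule.span_eq]
  have hone_ne : (1 : Fin (p ^ e * lam) → F) ≠ 0 := by
    intro h
    have := congr_fun h (⟨0, hnpos⟩ : Fin (p ^ e * lam))
    simp at this
  have hpart1 : 1 ≤ kerDim (ghCode H) := by
    rw [hker_eq]
    haveI : Nontrivial (kerSubmodule (ghCode H)) :=
      nontrivial_of_ne ⟨1, hone_mem⟩ 0 (by
        intro h
        exact hone_ne (congrArg Subtype.val h))
    haveI : Module.Finite F (kerSubmodule (ghCode H)) := Module.Finite.of_finite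
    exact Module.finrank_pos_iff.mpr ‹Nontrivial _›
  -- ZMod p module structure
  letI : Module (ZMod p) (Fin (p ^ e * lam) → F) := AddCommGroup.zmodModule (by
    intro x
    funext i
    simp [Pi.smul_apply, nsmul_eq_mul, CharP.cast_eq_zero F p])
  obtain ⟨d, hdP⟩ := exists_card_pow_aux hp (pKerAddSubgroup (ghCode H))
  have hPset : Nat.card ↥(pKerSet (ghCode H)) = Nat.card ↥(pKerAddSubgroup (ghCode H)) :=
    Nat.card_congr ⟨fun x => ⟨x.1, x.2⟩, fun x => ⟨x.1, x.2⟩, fun _ => rfl, fun _ => rfl⟩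
  have hcardP : Nat.card (pKerSet (ghCode H)) = p ^ d := hPset.trans hdP
  refine ⟨hpart1, d, hcardP, ?_, ?_⟩
  · -- e * kerDim ≤ d
    haveI : Fintype (kerSubmodule (ghCode H)) := Fintype.ofFinite _
    have hK : Nat.card (kerSet (ghCode H)) = p ^ (e * kerDim (ghCode H)) := by
      have h1 : Nat.card (kerSet (ghCode H)) = Nat.card (kerSubmodule (ghCode H)) :=
        Nat.card_congr ⟨fun x => ⟨x.1, x.2⟩, fun x => ⟨x.1, x.2⟩, fun _ => rfl, fun _ => rfl⟩
      rw [h1, Nat.card_eq_fintype_card, Module.card_eq_pow_finrank (K := F) (V := kerSubmodule (ghCode H)),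
        hcard, hker_eq, ← pow_mul]
    have hle : Nat.card (kerSet (ghCode H)) ≤ Nat.card (pKerSet (ghCode H)) :=
      Nat.card_mono (Set.toFinite _) (kerSet_subset_pKerSet (ghCode H))
    rw [hK, hcardP] at hle
    exact (Nat.pow_le_pow_iff_right hp.one_lt).mp hle
  · -- d ≤ e + t
    -- |(ghCode H)| = q * n
    have hinj : Function.Injective
        (fun z : F × Fin (p ^ e * lam) => (fun s => H z.2 s + z.1 : Fin (p ^ e * lam) → F)) := by
      rintro ⟨α, i⟩ ⟨β, j⟩ hEq
      simp only at hEq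
      by_cases hij : i = j
      · subst hij
        have := congr_fun hEq (⟨0, hnpos⟩ : Fin (p ^ e * lam))
        simp only [add_right_inj] at this
        rw [this]
      · exfalso
        obtain ⟨a, ha⟩ := exists_ne (β - α)
        have hfilter := hGH i j hij a
        have hempty : (Finset.univ.filter (fun s => H i s - H j s = a)) = ∅ := by
          apply Finset.filter_false_of_mem
          intro s _
          have hs := congr_fun hEq s
          intro haeq
          apply ha
          rw [← haeq]
          have : H i s = H j s + β - α := by rw [← hs]; ring
          rw [this]; ring
        rw [hempty] at hfilter
        simp at hfilter
        omega
    have hrange : (ghCode H) = Set.range (fun z : F × Fin (p ^ e * lam) => (fun s => H z.2 s + z.1 : Fin (p ^ e * lam) → F)) := by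
      ext v
      constructor
      · rintro ⟨α, i, rfl⟩; exact ⟨(α, i), rfl⟩
      · rintro ⟨⟨α, i⟩, rfl⟩; exact ⟨α, i, rfl⟩
    have hcardC : Nat.card (ghCode H) = p ^ (e + t) * s := by
      rw [hrange, Nat.card_range_of_injective hinj, Nat.card_prod,
        Nat.card_eq_fintype_card, Nat.card_eq_fintype_card, hcard, Fintype.card_fin]
      rw [hn, pow_add]
      ring
    -- (ghCode H) is a union of cosets of (pKerAddSubgroup (ghCode H))
    have hCpre : (ghCode H) = QuotientAddGroup.mk ⁻¹' (QuotientAddGroup.mk '' (ghCode H) : Set ((Fin (p ^ e * lam) → F) ⧸ (pKerAddSubgroup (ghCode H)))) := by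
      apply Set.Subset.antisymm (Set.subset_preimage_image _ _)
      intro x hx
      obtain ⟨c, hc, hcx⟩ := hx
      have hm : -c + x ∈ pKerSet (ghCode H) := (QuotientAddGroup.eq).mp hcx
      have himg : (fun c' => (-c + x) + c') '' (ghCode H) = (ghCode H) := hm
      rw [← himg]
      exact ⟨c, hc, by show -c + x + c = x; rw [add_comm (-c) x, add_assoc, neg_add_cancel, add_zero]⟩
    have hsplit : Nat.card (ghCode H) = Nat.card ↥(pKerAddSubgroup (ghCode H)) * Nat.card (QuotientAddGroup.mk '' (ghCode H) : Set ((Fin (p ^ e * lam) → F) ⧸ (pKerAddSubgroup (ghCode H)))) := by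
      conv_lhs => rw [hCpre]
      rw [Nat.card_congr (QuotientAddGroup.preimageMkEquivAddSubgroupProdSet (pKerAddSubgroup (ghCode H)) _), Nat.card_prod]
    have hdvd : p ^ d ∣ p ^ (e + t) * s := by
      rw [← hcardC, hsplit, hdP]
      exact Dvd.intro _ rfl
    have hdvd2 : p ^ d ∣ p ^ (e + t) :=
      (Nat.Coprime.pow_left d hps).dvd_of_dvd_mul_right hdvd
    exact (Nat.pow_dvd_pow_iff_le_right hp.one_lt).mp hdvd2
end

section
/- For q > 3, there exist two generalized Hadamard matrices H(q,1) over 𝔽_q, namely S_q and the matrix S′_q obtained from S_q by transposing its second and third columns, which are not translation equivalent; moreover, the sets of rows F_{S_q} and F_{S′_q} intersect only in the zero vector. -/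
open Finset

theorem stmt7 {q : ℕ} {F : Type*} [Field F] [Fintype F] [DecidableEq F]
    (hcard : Fintype.card F = q) (hq : 3 < q)
    (ω : F) (hω : ∀ x : F, x ≠ 0 → ∃ k : ℕ, ω ^ k = x) :
    IsGH 1 (mulTable F) ∧
    IsGH 1 (fun i j => i * (Equiv.swap (1 : F) ω j) : Matrix F F F) ∧
    ¬ TransEquiv (mulTable F) (fun i j => i * (Equiv.swap (1 : F) ω j) : Matrix F F F) ∧
    rowSet (mulTable F) ∩
      rowSet (fun i j => i * (Equiv.swap (1 : F) ω j) : Matrix F F F) = {0} := by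
  set σ := Equiv.swap (1 : F) ω with hσ
  have hx : ∃ x : F, x ≠ 0 ∧ x ≠ 1 ∧ x ≠ ω := by
    by_contra h
    push_neg at h
    have hsub : (Finset.univ : Finset F) ⊆ {0, 1, ω} := by
      intro x _
      simp only [Finset.mem_insert, Finset.mem_singleton]
      by_contra hx
      push_neg at hx
      exact hx.2.2 (h x hx.1 hx.2.1)
    have h1 := Finset.card_le_card hsub
    have h3 : ({0, 1, ω} : Finset F).card ≤ 3 :=
      le_trans (Finset.card_insert_le _ _)
        (by exact Nat.add_le_add_right (le_trans (Finset.card_insert_le _ _)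
          (by simp)) 1)
    rw [Finset.card_univ, hcard] at h1
    omega
  obtain ⟨z, hz0, hz1, hzω⟩ := hx
  have hω1 : ω ≠ 1 := by
    rintro rfl
    obtain ⟨k, hk⟩ := hω z hz0
    simp at hk
    exact hz1 hk.symm
  have hω0 : ω ≠ 0 := by
    rintro rfl
    obtain ⟨k, hk⟩ := hω z hz0
    rcases Nat.eq_zero_or_pos k with rfl | hkpos
    · simp at hk; exact hz1 hk.symm
    · rw [zero_pow hkpos.ne'] at hk
      exact hz0 hk.symm
  have gh1 : IsGH 1 (mulTable F) := by
    intro i j hij a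
    have hd : i - j ≠ 0 := sub_ne_zero.mpr hij
    rw [Finset.card_eq_one]
    refine ⟨(i - j)⁻¹ * a, ?_⟩
    ext s
    simp only [Finset.mem_filter, Finset.mem_univ, true_and, Finset.mem_singleton, mulTable]
    refine Finset.mem_filter.trans ?_
    show s ∈ Finset.univ ∧ i * s - j * s = a ↔ s = (i - j)⁻¹ * a
    rw [and_iff_right (Finset.mem_univ _), ← sub_mul]
    constructor
    · rintro rfl
      rw [← mul_assoc, inv_mul_cancel₀ hd, one_mul]
    · rintro rfl
      rw [← mul_assoc, mul_inv_cancel₀ hd, one_mul]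
  have gh2 : IsGH 1 (fun i j => i * (Equiv.swap (1 : F) ω j) : Matrix F F F) := by
    intro i j hij a
    have hd : i - j ≠ 0 := sub_ne_zero.mpr hij
    rw [Finset.card_eq_one]
    refine ⟨σ.symm ((i - j)⁻¹ * a), ?_⟩
    ext s
    simp only [Finset.mem_filter, Finset.mem_univ, true_and, Finset.mem_singleton, ← hσ]
    rw [← sub_mul, Equiv.eq_symm_apply]
    constructor
    · rintro rfl
      rw [← mul_assoc, inv_mul_cancel₀ hd, one_mul]
    · intro h
      rw [h, ← mul_assoc, mul_inv_cancel₀ hd, one_mul]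
  have hinter : rowSet (mulTable F) ∩
      rowSet (fun i j => i * (Equiv.swap (1 : F) ω j) : Matrix F F F) = {0} := by
    ext v
    simp only [Set.mem_inter_iff, Set.mem_singleton_iff, rowSet, Set.mem_range, ← hσ]
    constructor
    · rintro ⟨⟨i, rfl⟩, ⟨i', hi'⟩⟩
      have hzz : i' = i := by
        have h1 := congrFun hi' z
        simp only [mulTable] at h1
        rw [Equiv.swap_apply_of_ne_of_ne hz1 hzω] at h1
        exact mul_right_cancel₀ hz0 h1
      subst hzz
      have h2 := congrFun hi' 1
      simp only [mulTable, mul_one] at h2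
      rw [Equiv.swap_apply_left] at h2
      have hi0 : i' = 0 := by
        by_contra hne
        exact hω1 (mul_left_cancel₀ hne (by rw [h2, mul_one]))
      subst hi0
      funext j
      simp [mulTable]
    · rintro rfl
      exact ⟨⟨0, by funext j; simp [mulTable]⟩, ⟨0, by funext j; simp⟩⟩
  refine ⟨gh1, gh2, ?_, hinter⟩
  rintro ⟨v, hv⟩
  have h0 : (0 : F → F) ∈ rowSet (fun i j => i * (Equiv.swap (1 : F) ω j) : Matrix F F F) :=
    ⟨0, by funext j; simp⟩
  rw [hv] at h0
  obtain ⟨b, ⟨i, rfl⟩, hb⟩ := h0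
  have hvdef : ∀ j : F, v j = (-i) * j := by
    intro j
    have h := congrFun hb j
    simp only [Pi.add_apply, Pi.zero_apply, mulTable] at h
    rw [neg_mul]
    exact eq_neg_of_add_eq_zero_left h
  have hσmem : (fun j => (1 : F) * σ j) ∈
      rowSet (fun i j => i * (Equiv.swap (1 : F) ω j) : Matrix F F F) := ⟨1, rfl⟩
  rw [hv] at hσmem
  obtain ⟨b, ⟨c, rfl⟩, hb2⟩ := hσmem
  have hσrow : (fun j => (1 : F) * σ j) ∈ rowSet (mulTable F) := by
    refine ⟨c - i, ?_⟩
    funext j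
    have h := congrFun hb2 j
    simp only [Pi.add_apply, mulTable] at h
    rw [hvdef j] at h
    show (c - i) * j = (1 : F) * σ j
    rw [← h]
    ring
  have hmem : (fun j => (1 : F) * σ j) ∈ rowSet (mulTable F) ∩
      rowSet (fun i j => i * (Equiv.swap (1 : F) ω j) : Matrix F F F) :=
    ⟨hσrow, ⟨1, rfl⟩⟩
  rw [hinter] at hmem
  have hc := congrFun hmem 1
  simp only [Pi.zero_apply, one_mul, hσ, Equiv.swap_apply_left] at hc
  exact hω0 hc
end

section
/- For every q > 2, there exists a generalized Hadamard matrix H(q,q) over 𝔽_q such that the associated GH code C_H of length n = q² over 𝔽_q has ker(C_H) = 2. -/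
open Finset

section Aux

variable {F : Type*} [Field F] [Fintype F] [DecidableEq F]

private def delta (x : F) : F := if x = 1 then 1 else 0

private lemma delta_zero : delta (0 : F) = 0 := if_neg zero_ne_one

private lemma delta_one : delta (1 : F) = 1 := if_pos rfl

private def Hmat : Matrix (F × F) (F × F) F :=
  fun p r => p.1 * r.1 + p.2 * r.2 + delta p.1 * delta r.2

private lemma mem_ghCode_iff (v : (F × F) → F) :
    v ∈ ghCode (Hmat (F := F)) ↔
      ∃ a b α : F, v = fun r => a * r.1 + b * r.2 + delta a * delta r.2 + α := by
  constructor
  · rintro ⟨α, ⟨a, b⟩, rfl⟩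
    exact ⟨a, b, α, rfl⟩
  · rintro ⟨a, b, α, rfl⟩
    exact ⟨α, (a, b), rfl⟩

private lemma exists_ne_ne (h : 2 < Fintype.card F) : ∃ u : F, u ≠ 0 ∧ u ≠ 1 := by
  by_contra hc
  push_neg at hc
  have hsub : (Finset.univ : Finset F) ⊆ {0, 1} := by
    intro x _
    by_cases hx : x = 0
    · simp [hx]
    · simp [hc x hx]
  have h1 := Finset.card_le_card hsub
  rw [Finset.card_univ] at h1
  have h2 : ({0, 1} : Finset F).card ≤ 2 := Finset.card_insert_le _ _ |>.trans (by simp)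
  omega

private lemma isGH_Hmat : IsGH (Fintype.card F) (Hmat (F := F)) := by
  rintro ⟨a, b⟩ ⟨a', b'⟩ hne v
  have key : ∀ s : F × F, Hmat (a, b) s - Hmat (a', b') s
      = (a - a') * s.1 + (b - b') * s.2 + (delta a - delta a') * delta s.2 := by
    intro s; simp only [Hmat]; ring
  rw [← Finset.card_univ]
  by_cases hA : a = a'
  · have hB : b ≠ b' := fun hb => hne (by rw [hA, hb])
    subst hA
    refine Finset.card_nbij' (fun s => s.1)
      (fun c => (c, (b - b')⁻¹ * v)) ?_ ?_ ?_ ?_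
    · intro s _; exact Finset.mem_univ _
    · intro c _
      simp only [Finset.mem_coe, Finset.mem_filter, Finset.mem_univ, true_and, key]
      have hbb : b - b' ≠ 0 := sub_ne_zero.2 hB
      field_simp
      ring
    · intro s hs
      simp only [Finset.mem_coe, Finset.mem_filter, Finset.mem_univ, true_and, key] at hs
      have hbb : b - b' ≠ 0 := sub_ne_zero.2 hB
      have : s.2 = (b - b')⁻¹ * v := by
        field_simp
        linear_combination hs
      exact Prod.ext rfl this.symm
    · intro c _; rfl
  · have hA' : a - a' ≠ 0 := sub_ne_zero.2 hA
    refine Finset.card_nbij' (fun s => s.2)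
      (fun d => ((a - a')⁻¹ * (v - (b - b') * d - (delta a - delta a') * delta d), d))
      ?_ ?_ ?_ ?_
    · intro s _; exact Finset.mem_univ _
    · intro d _
      simp only [Finset.mem_coe, Finset.mem_filter, Finset.mem_univ, true_and, key]
      field_simp
      ring
    · intro s hs
      simp only [Finset.mem_coe, Finset.mem_filter, Finset.mem_univ, true_and, key] at hs
      have : s.1 = (a - a')⁻¹ * (v - (b - b') * s.2 - (delta a - delta a') * delta s.2) := by
        field_simp
        linear_combination hs
      exact Prod.ext this.symm rfl
    · intro d _; rfl

private lemma kerSet_Hmat (hq : 2 < Fintype.card F) :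
    kerSet (ghCode (Hmat (F := F))) = {v : F × F → F | ∃ b α : F, v = fun r => b * r.2 + α} := by
  obtain ⟨u, hu0, hu1⟩ := exists_ne_ne (F := F) hq
  have hdu : delta u = (0 : F) := if_neg hu1
  ext x
  constructor
  · intro hx
    have h0 : (0 : (F × F) → F) ∈ ghCode (Hmat (F := F)) := by
      rw [mem_ghCode_iff]
      exact ⟨0, 0, 0, by funext r; simp [delta_zero]⟩
    have hxC : x ∈ ghCode (Hmat (F := F)) := by
      have : (fun i => (1 : F) * x i) + 0 ∈
          (fun c => (fun i => (1 : F) * x i) + c) '' ghCode (Hmat (F := F)) :=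
        ⟨0, h0, rfl⟩
      rw [hx 1] at this
      simpa using this
    rw [mem_ghCode_iff] at hxC
    obtain ⟨a, b, α, rfl⟩ := hxC
    have R : ∀ β a' : F, β * delta a + delta a' = delta (β * a + a') := by
      intro β a'
      have hw : (fun r : F × F => a' * r.1 + 0 * r.2 + delta a' * delta r.2 + 0)
          ∈ ghCode (Hmat (F := F)) := (mem_ghCode_iff _).2 ⟨a', 0, 0, rfl⟩
      have hmem : ((fun i => β * (a * i.1 + b * i.2 + delta a * delta i.2 + α)) +
          fun r : F × F => a' * r.1 + 0 * r.2 + delta a' * delta r.2 + 0)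
          ∈ ghCode (Hmat (F := F)) := by
        rw [← hx β]
        exact ⟨_, hw, rfl⟩
      rw [mem_ghCode_iff] at hmem
      obtain ⟨a'', b'', α'', heq⟩ := hmem
      have E00 := congrFun heq (0, 0)
      have E10 := congrFun heq (1, 0)
      have E0u := congrFun heq (0, u)
      have E01 := congrFun heq (0, 1)
      simp only [Pi.add_apply, delta_zero, delta_one, hdu, mul_zero, mul_one, zero_mul,
        add_zero, zero_add] at E00 E10 E0u E01
      have ha'' : a'' = β * a + a' := by linear_combination E00 - E10
      have hb'' : b'' = β * b := by
        have h1 : (β * b - b'') * u = 0 := by linear_combination E0u - E00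
        rcases mul_eq_zero.1 h1 with h | h
        · exact (sub_eq_zero.1 h).symm
        · exact absurd h hu0
      rw [← ha'']
      linear_combination E01 - E00 + hb''
    by_cases ha1 : a = 1
    · exfalso
      have h1 := R 1 u
      rw [ha1, delta_one, hdu] at h1
      have : delta (1 * 1 + u) = (0 : F) := by
        apply if_neg
        intro hcontra
        exact hu0 (by linear_combination hcontra)
      rw [this] at h1
      simp at h1
    · by_cases ha0 : a = 0
      · subst ha0
        refine ⟨b, α, ?_⟩
        funext r
        simp [delta_zero]
      · exfalso
        have h2 := R 1 1
        rw [delta_one] at h2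
        have hda : delta a = (0 : F) := if_neg ha1
        have : delta (1 * a + 1) = (0 : F) := by
          apply if_neg
          intro hcontra
          exact ha0 (by linear_combination hcontra)
        rw [hda, this] at h2
        simp at h2
  · rintro ⟨b, α, rfl⟩
    intro β
    ext v
    constructor
    · rintro ⟨w, hw, rfl⟩
      rw [mem_ghCode_iff] at hw
      obtain ⟨a', b', α', rfl⟩ := hw
      rw [mem_ghCode_iff]
      exact ⟨a', b' + β * b, α' + β * α, by funext r; simp only [Pi.add_apply]; ring⟩
    · intro hv
      rw [mem_ghCode_iff] at hv
      obtain ⟨a', b', α', rfl⟩ := hv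
      refine ⟨fun r => a' * r.1 + (b' - β * b) * r.2 + delta a' * delta r.2 + (α' - β * α),
        (mem_ghCode_iff _).2 ⟨a', b' - β * b, α' - β * α, rfl⟩, ?_⟩
      funext r
      simp only [Pi.add_apply]
      ring

private lemma kerDim_Hmat (hq : 2 < Fintype.card F) :
    kerDim (ghCode (Hmat (F := F))) = 2 := by
  rw [kerDim, kerSet_Hmat hq]
  have hspan : Submodule.span F {v : F × F → F | ∃ b α : F, v = fun r => b * r.2 + α} =
      Submodule.span F (Set.range ![(fun r : F × F => r.2), (fun _ : F × F => (1 : F))]) := by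
    apply le_antisymm
    · rw [Submodule.span_le]
      rintro v ⟨b, α, rfl⟩
      have : (fun r : F × F => b * r.2 + α) =
          b • (fun r : F × F => r.2) + α • (fun _ : F × F => (1 : F)) := by
        funext r; simp [Pi.smul_apply, smul_eq_mul]
      rw [this]
      exact Submodule.add_mem _
        (Submodule.smul_mem _ _ (Submodule.subset_span ⟨0, rfl⟩))
        (Submodule.smul_mem _ _ (Submodule.subset_span ⟨1, rfl⟩))
    · rw [Submodule.span_le]
      rintro v ⟨i, rfl⟩
      fin_cases i
      · exact Submodule.subset_span ⟨1, 0, by funext r; simp⟩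
      · exact Submodule.subset_span ⟨0, 1, by funext r; simp⟩
  rw [hspan, finrank_span_eq_card ?_]
  · simp
  · rw [LinearIndependent.pair_iff]
    intro s t h
    have h0 := congrFun h ((0 : F), (0 : F))
    have h1 := congrFun h ((0 : F), (1 : F))
    simp only [Pi.add_apply, Pi.smul_apply, smul_eq_mul, Matrix.cons_val_zero,
      Matrix.cons_val_one, Matrix.head_cons, Pi.zero_apply, mul_zero, mul_one, zero_add] at h0 h1
    refine ⟨by linear_combination h1 - h0, by linear_combination h0⟩

private lemma kerSet_image_equiv {ι κ : Type*} (e : κ ≃ ι) (C : Set (ι → F)) :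
    kerSet ((fun v : ι → F => v ∘ e) '' C) = (fun v : ι → F => v ∘ e) '' kerSet C := by
  have hinj : Function.Injective (fun v : ι → F => v ∘ e) := by
    intro v w h
    funext i
    have := congrFun h (e.symm i)
    simpa using this
  have hcomm : ∀ (α : F) (y : ι → F),
      (fun c : κ → F => (fun i => α * (y ∘ e) i) + c) '' ((fun v : ι → F => v ∘ e) '' C)
        = (fun v : ι → F => v ∘ e) '' ((fun c => (fun i => α * y i) + c) '' C) := by
    intro α y
    rw [Set.image_image, Set.image_image]
    rfl
  ext x
  constructor
  · intro hx
    refine ⟨x ∘ e.symm, ?_, by funext k; simp⟩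
    intro α
    have key := hx α
    have hxe : (fun i => α * x i) = fun i => α * ((x ∘ e.symm) ∘ e) i := by
      funext i; simp
    rw [hxe, hcomm α (x ∘ e.symm)] at key
    exact (Set.image_injective.2 hinj) key
  · rintro ⟨y, hy, rfl⟩
    intro α
    rw [hcomm α y, hy α]

end Aux

theorem stmt8 {q : ℕ} {F : Type*} [Field F] [Fintype F] [DecidableEq F]
    (hcard : Fintype.card F = q) (hq : 2 < q) :
    ∃ H : Matrix (Fin (q * q)) (Fin (q * q)) F,
      IsGH q H ∧ Normalized H ∧ kerDim (ghCode H) = 2 := by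
  have hq0 : 0 < q * q := by nlinarith
  have hcard2 : Fintype.card (F × F) = q * q := by
    rw [Fintype.card_prod, hcard]
  have hcardF : 2 < Fintype.card F := by rw [hcard]; exact hq
  let e0 : Fin (q * q) ≃ F × F :=
    Fintype.equivOfCardEq (by rw [Fintype.card_fin, hcard2])
  let e : Fin (q * q) ≃ F × F :=
    e0.trans (Equiv.swap (e0 ⟨0, hq0⟩) ((0, 0) : F × F))
  have he0 : e ⟨0, hq0⟩ = ((0, 0) : F × F) := by
    simp [e, Equiv.swap_apply_left]
  refine ⟨fun i s => Hmat (e i) (e s), ?_, ?_, ?_⟩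
  · -- IsGH
    intro i j hij v
    have hne : e i ≠ e j := fun h => hij (e.injective h)
    have h2 := isGH_Hmat (F := F) (e i) (e j) hne v
    rw [hcard] at h2
    exact (Finset.card_equiv e (fun s => by simp)).trans h2
  · -- Normalized
    intro i s h
    rcases h with h | h
    · have hi : i = ⟨0, hq0⟩ := Fin.ext h
      show Hmat (e i) (e s) = 0
      rw [hi, he0]
      simp [Hmat, delta_zero]
    · have hs : s = ⟨0, hq0⟩ := Fin.ext h
      show Hmat (e i) (e s) = 0
      rw [hs, he0]
      simp [Hmat, delta_zero]
  · -- kerDim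
    have hcode : ghCode (fun i s => Hmat (e i) (e s)) =
        (fun v : (F × F) → F => v ∘ e) '' ghCode (Hmat (F := F)) := by
      ext v
      constructor
      · rintro ⟨α, i, rfl⟩
        exact ⟨fun r => Hmat (e i) r + α, ⟨α, e i, rfl⟩, rfl⟩
      · rintro ⟨w, ⟨α, p, rfl⟩, rfl⟩
        exact ⟨α, e.symm p, by funext s; simp⟩
    rw [kerDim, hcode, kerSet_image_equiv]
    let T : ((F × F) → F) ≃ₗ[F] (Fin (q * q) → F) :=
      { toFun := fun v => v ∘ e
        invFun := fun v => v ∘ e.symm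
        map_add' := fun _ _ => rfl
        map_smul' := fun _ _ => rfl
        left_inv := fun v => by funext r; simp
        right_inv := fun v => by funext s; simp }
    have himg : (fun v : (F × F) → F => v ∘ e) '' kerSet (ghCode (Hmat (F := F)))
        = T.toLinearMap '' kerSet (ghCode (Hmat (F := F))) := rfl
    rw [himg, Submodule.span_image, LinearEquiv.finrank_map_eq T]
    exact kerDim_Hmat hcardF
end

section
/- Let C_H be a GH code of length n = q^h·s over 𝔽_q, where s ≠ 1 and s is not a multiple of q. If ker(C_H) > 1, then h ≥ 2. -/
open Finset

private lemma gh_key_lemma {q lam : ℕ} {F : Type*} [Field F] [Fintype F] [DecidableEq F]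
    (hcard : Fintype.card F = q) (hlam : 2 ≤ lam)
    (H : Matrix (Fin (q * lam)) (Fin (q * lam)) F)
    (hGH : IsGH lam H) (hnorm : Normalized H)
    (hker : 1 < kerDim (ghCode H)) : q ∣ lam := by
  classical
  have hq2 : 2 ≤ q := hcard ▸ Fintype.one_lt_card
  have hn0 : 0 < q * lam := Nat.mul_pos (by omega) (by omega)
  set z : Fin (q * lam) := ⟨0, hn0⟩ with hzdef
  have hz : ∀ s, H z s = 0 := fun s => hnorm z s (Or.inl rfl)
  -- differences of distinct rows are not constant
  have hrow_ne : ∀ i j : Fin (q * lam), i ≠ j → ∀ c : F, ∃ s, H i s - H j s ≠ c := by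
    intro i j hij c
    obtain ⟨a, ha⟩ := exists_ne c
    have hc := hGH i j hij a
    have hpos : 0 < (univ.filter fun s => H i s - H j s = a).card := by omega
    obtain ⟨s, hsmem⟩ := Finset.card_pos.mp hpos
    exact ⟨s, by rw [(Finset.mem_filter.mp hsmem).2]; exact ha⟩
  -- fibers of nonzero rows
  have hfiber : ∀ i : Fin (q * lam), i ≠ z → ∀ a : F,
      (univ.filter fun s => H i s = a).card = lam := by
    intro i hi a
    have := hGH i z hi a
    simpa [hz] using this
  -- a nonconstant kernel element
  have hxex : ∃ x ∈ kerSet (ghCode H), ∃ s t, x s ≠ x t := by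
    by_contra hcon
    push_neg at hcon
    have hsub : kerSet (ghCode H) ⊆
        (Submodule.span F {(fun _ => 1 : Fin (q * lam) → F)} : Submodule F _) := by
      intro x hx
      have hxc : ∀ s, x s = x z := fun s => hcon x hx s z
      have hxeq : x = x z • (fun _ => 1 : Fin (q * lam) → F) := by
        funext s; simp [hxc s]
      rw [hxeq]
      exact Submodule.smul_mem _ _ (Submodule.subset_span rfl)
    have hle : Submodule.span F (kerSet (ghCode H)) ≤
        Submodule.span F {(fun _ => 1 : Fin (q * lam) → F)} :=
      Submodule.span_le.mpr hsub
    have h1 : Module.finrank F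
        (Submodule.span F {(fun _ => 1 : Fin (q * lam) → F)}) = 1 := by
      apply finrank_span_singleton
      intro h0
      have := congrFun h0 z
      simp at this
    have hmono := Submodule.finrank_mono hle
    rw [h1] at hmono
    unfold kerDim at hker
    omega
  obtain ⟨x, hxker, s₁, t₁, hxne⟩ := hxex
  have h0C : (0 : Fin (q * lam) → F) ∈ ghCode H := ⟨0, z, by funext s; simp [hz]⟩
  have hxC : x ∈ ghCode H := by
    rw [← hxker 1]
    exact ⟨0, h0C, by funext i; simp⟩
  obtain ⟨γ, i₀, hxeq⟩ := hxC
  have hi₀ : i₀ ≠ z := by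
    intro hcontra
    apply hxne
    rw [hxeq]
    simp [hcontra, hz]
  have hxfib : ∀ a : F, (univ.filter fun s => x s = a).card = lam := by
    intro a
    have heq : (univ.filter fun s => x s = a)
        = (univ.filter fun s => H i₀ s = a - γ) := by
      apply Finset.filter_congr
      intro s _
      rw [hxeq]
      exact eq_sub_iff_add_eq.symm
    rw [heq]
    exact hfiber i₀ hi₀ _
  have hkadd : ∀ β : F, ∀ c ∈ ghCode H, ((fun i => β * x i) + c) ∈ ghCode H := by
    intro β c hc
    rw [← hxker β]
    exact ⟨c, hc, rfl⟩
  have hrowC : ∀ jj : Fin (q * lam), H jj ∈ ghCode H :=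
    fun jj => ⟨0, jj, by funext s; simp⟩
  -- a good row j
  have hgood : ∃ j : Fin (q * lam), ∀ β : F,
      ∃ s t, β * x s + H j s ≠ β * x t + H j t := by
    by_contra hcon
    push_neg at hcon
    choose f hf using hcon
    have hinj : Function.Injective f := by
      intro a b hab
      by_contra hne
      have h1 := hf a
      have h2 := hf b
      have hd : ∀ s, H a s - H b s = H a z - H b z := by
        intro s
        have e1 : f a * x s + H a s = f a * x z + H a z := h1 s z
        have e2 : f a * x s + H b s = f a * x z + H b z := by
          rw [hab]; exact h2 s z
        linear_combination e1 - e2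
      obtain ⟨s, hsne⟩ := hrow_ne a b hne (H a z - H b z)
      exact hsne (hd s)
    have hle := Fintype.card_le_of_injective f hinj
    rw [hcard, Fintype.card_fin] at hle
    nlinarith
  obtain ⟨j, hj⟩ := hgood
  -- line sums
  have hFw : ∀ β w : F, (univ.filter fun s => β * x s + H j s = w).card = lam := by
    intro β w
    obtain ⟨α, i, hieq⟩ := hkadd β (H j) (hrowC j)
    have hpt : ∀ s, β * x s + H j s = H i s + α := fun s => congrFun hieq s
    have hiz : i ≠ z := by
      intro hcontra
      obtain ⟨s, t, hst⟩ := hj β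
      apply hst
      rw [hpt s, hpt t, hcontra, hz, hz]
    have heq : (univ.filter fun s => β * x s + H j s = w)
        = (univ.filter fun s => H i s = w - α) := by
      apply Finset.filter_congr
      intro s _
      rw [hpt s]
      exact eq_sub_iff_add_eq.symm
    rw [heq]
    exact hfiber i hiz _
  set m : F → F → ℕ :=
    fun a e => (univ.filter fun s => x s = a ∧ H j s = e).card with hm
  have hG1 : ∀ a : F, ∑ e : F, m a e = lam := by
    intro a
    rw [← hxfib a]
    rw [Finset.card_eq_sum_card_fiberwise (f := fun s => H j s) (t := univ)
      (fun s _ => mem_univ _)]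
    apply Finset.sum_congr rfl
    intro e _
    rw [Finset.filter_filter]
  have hG2 : ∀ β w : F, ∑ a : F, m a (w - β * a) = lam := by
    intro β w
    rw [← hFw β w]
    rw [Finset.card_eq_sum_card_fiberwise (f := fun s => x s) (t := univ)
      (fun s _ => mem_univ _)]
    apply Finset.sum_congr rfl
    intro a _
    rw [Finset.filter_filter]
    apply congrArg Finset.card
    apply Finset.filter_congr
    intro s _
    constructor
    · rintro ⟨h1, h2⟩
      refine ⟨?_, h1⟩
      rw [h1]
      linear_combination h2
    · rintro ⟨h1, h2⟩
      refine ⟨h2, ?_⟩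
      rw [h2] at h1
      linear_combination h1
  -- sum over all slopes through (0,0)
  have hsum : ∑ β : F, ∑ a : F, m a (-(β * a)) = q * lam := by
    have : ∀ β : F, ∑ a : F, m a (-(β * a)) = lam := by
      intro β
      have := hG2 β 0
      simpa [zero_sub] using this
    rw [Finset.sum_congr rfl fun β _ => this β]
    rw [Finset.sum_const, Finset.card_univ, hcard, smul_eq_mul]
  rw [Finset.sum_comm] at hsum
  have hsplit : ∑ a : F, ∑ β : F, m a (-(β * a))
      = (∑ β : F, m 0 (-(β * 0))) + ∑ a ∈ univ.erase 0, ∑ β : F, m a (-(β * a)) :=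
    (Finset.add_sum_erase univ _ (mem_univ (0 : F))).symm
  have h0term : ∑ β : F, m 0 (-(β * (0:F))) = q * m 0 0 := by
    simp [Finset.sum_const, Finset.card_univ, hcard]
  have herase : ∑ a ∈ univ.erase 0, ∑ β : F, m a (-(β * a)) = (q - 1) * lam := by
    have hterm : ∀ a ∈ univ.erase (0:F), ∑ β : F, m a (-(β * a)) = lam := by
      intro a ha
      have ha0 : a ≠ 0 := Finset.ne_of_mem_erase ha
      have hbij : ∑ β : F, m a (-(β * a)) = ∑ e : F, m a e := by
        have := Equiv.sum_comp ((Equiv.mulRight₀ a ha0).trans (Equiv.neg F)) (m a)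
        simpa using this
      rw [hbij]
      exact hG1 a
    rw [Finset.sum_congr rfl hterm, Finset.sum_const]
    rw [Finset.card_erase_of_mem (mem_univ _), Finset.card_univ, hcard, smul_eq_mul]
  rw [hsplit, h0term, herase] at hsum
  -- conclude lam = q * m 0 0
  refine ⟨m 0 0, ?_⟩
  have hq1 : (q - 1) * lam + lam = q * lam := by
    obtain ⟨q', rfl⟩ : ∃ q', q = q' + 1 := ⟨q - 1, by omega⟩
    simp [Nat.add_sub_cancel, add_mul]
  have : q * m 0 0 + ((q - 1) * lam + lam) = q * lam + lam := by
    rw [← add_assoc, hsum]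
  rw [hq1] at this
  rw [add_comm (q * lam) lam] at this
  exact (Nat.add_right_cancel this).symm

theorem stmt10 {q lam h s : ℕ} {F : Type*} [Field F] [Fintype F] [DecidableEq F]
    (hcard : Fintype.card F = q) (hlam : 0 < lam)
    (hs1 : s ≠ 1) (hs : ¬ q ∣ s) (hn : q * lam = q ^ h * s)
    (H : Matrix (Fin (q * lam)) (Fin (q * lam)) F)
    (hGH : IsGH lam H) (hnorm : Normalized H)
    (hker : 1 < kerDim (ghCode H)) :
    2 ≤ h := by
  by_contra hcon
  push_neg at hcon
  interval_cases h
  · rw [pow_zero, one_mul] at hn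
    exact hs ⟨lam, hn.symm⟩
  · rw [pow_one] at hn
    have hq2 : 2 ≤ q := hcard ▸ Fintype.one_lt_card
    have hlam_s : lam = s := Nat.eq_of_mul_eq_mul_left (by omega) hn
    have hs2 : 2 ≤ lam := by omega
    exact hs (hlam_s ▸ gh_key_lemma hcard hs2 H hGH hnorm hker)
end

section
/- Let H(q,λ) be a normalized generalized Hadamard matrix over 𝔽_q, with q > 2, or with q = 2 and λ even. Then rank(C_H) ≤ n − 1, where n = qλ. -/
open Finset

lemma sum_univ_field_eq_zero {F : Type*} [Field F] [Fintype F] [DecidableEq F]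
    (h : 2 < Fintype.card F) : ∑ x : F, x = 0 := by
  obtain ⟨a, ha⟩ : ∃ a : F, a ∉ ({0, 1} : Finset F) := by
    by_contra h'
    push_neg at h'
    have hsub : (Finset.univ : Finset F) ⊆ {0, 1} := fun x _ => h' x
    have h1 := Finset.card_le_card hsub
    have h2 : ({0, 1} : Finset F).card ≤ 2 :=
      (Finset.card_insert_le _ _).trans (by simp)
    rw [Finset.card_univ] at h1
    omega
  simp only [Finset.mem_insert, Finset.mem_singleton, not_or] at ha
  have h1 : ∑ x : F, a * x = a * ∑ x : F, x := (Finset.mul_sum _ _ _).symm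
  have h2 : ∑ x : F, a * x = ∑ x : F, x :=
    Fintype.sum_equiv (Equiv.mulLeft₀ a ha.1) _ _ (fun x => rfl)
  have h3 : (a - 1) * ∑ x : F, x = 0 := by
    rw [sub_mul, one_mul, ← h1, h2, sub_self]
  rcases mul_eq_zero.mp h3 with h4 | h4
  · exact absurd (sub_eq_zero.mp h4) ha.2
  · exact h4

theorem stmt14 {q lam : ℕ} {F : Type*} [Field F] [Fintype F] [DecidableEq F]
    (hcard : Fintype.card F = q) (hlam : 0 < lam)
    (hq : 2 < q ∨ (q = 2 ∧ Even lam))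
    (H : Matrix (Fin (q * lam)) (Fin (q * lam)) F)
    (hGH : IsGH lam H) (hnorm : Normalized H) :
    rankC (ghCode H) ≤ q * lam - 1 := by
  have hq2 : 2 ≤ q := hcard ▸ Fintype.one_lt_card
  have hn : 0 < q * lam := Nat.mul_pos (by omega) hlam
  set z0 : Fin (q * lam) := ⟨0, hn⟩ with hz0
  -- the scalar sum vanishes
  have hS : lam • (∑ x : F, x) = 0 := by
    rcases hq with h | ⟨hq2', hev⟩
    · rw [sum_univ_field_eq_zero (hcard ▸ h), smul_zero]
    · obtain ⟨m, hm⟩ := hev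
      have h2 : (∑ x : F, x) + (∑ x : F, x) = 0 := by
        have hc : ((2 : ℕ) : F) = 0 := by
          rw [← hq2', ← hcard]; exact FiniteField.cast_card_eq_zero F
        have : ((2 : ℕ) : F) * (∑ x : F, x) = (∑ x : F, x) + (∑ x : F, x) := by
          push_cast; ring
        rw [← this, hc, zero_mul]
      rw [hm, add_nsmul, ← smul_add, h2, smul_zero]
  -- every row sums to zero
  have hrow : ∀ i, ∑ s, H i s = 0 := by
    intro i
    by_cases hi : i = z0
    · subst hi
      exact Finset.sum_eq_zero fun s _ => hnorm z0 s (Or.inl rfl)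
    · have key := hGH i z0 hi
      have hH0 : ∀ s, H i s - H z0 s = H i s := fun s => by
        rw [hnorm z0 s (Or.inl rfl), sub_zero]
      calc ∑ s, H i s
          = ∑ a : F, ∑ s ∈ univ.filter (fun s => H i s - H z0 s = a), H i s :=
            (Finset.sum_fiberwise univ (fun s => H i s - H z0 s) (fun s => H i s)).symm
        _ = ∑ a : F, lam • a := by
            refine Finset.sum_congr rfl fun a _ => ?_
            have hconst : ∑ s ∈ univ.filter (fun s => H i s - H z0 s = a), H i s
                = (univ.filter (fun s => H i s - H z0 s = a)).card • a := by
              rw [← Finset.sum_const]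
              refine Finset.sum_congr rfl fun s hs => ?_
              rw [← hH0 s, (Finset.mem_filter.mp hs).2]
            rw [hconst, key a]
        _ = lam • ∑ a : F, a := (Finset.smul_sum).symm
        _ = 0 := hS
  -- every codeword sums to zero
  have hsum : ∀ v ∈ ghCode H, ∑ s, v s = 0 := by
    rintro v ⟨α, i, rfl⟩
    rw [Finset.sum_add_distrib, hrow i, zero_add, Finset.sum_const, Finset.card_univ,
      Fintype.card_fin, nsmul_eq_mul]
    have hcast : ((q * lam : ℕ) : F) = 0 := by
      push_cast
      have : ((q : ℕ) : F) = 0 := by rw [← hcard]; exact FiniteField.cast_card_eq_zero F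
      rw [this, zero_mul]
    rw [hcast, zero_mul]
  -- the summing linear functional
  set φ : (Fin (q * lam) → F) →ₗ[F] F := ∑ i, LinearMap.proj i with hφdef
  have hφ : ∀ v, φ v = ∑ i, v i := fun v => by
    simp [hφdef, LinearMap.proj]
  have hle : Submodule.span F (ghCode H) ≤ LinearMap.ker φ := by
    rw [Submodule.span_le]
    intro v hv
    simp only [SetLike.mem_coe, LinearMap.mem_ker, hφ]
    exact hsum v hv
  have hr : LinearMap.range φ = ⊤ := by
    rw [LinearMap.range_eq_top]
    intro c
    refine ⟨Pi.single z0 c, ?_⟩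
    rw [hφ]
    simp
  have hker : Module.finrank F (LinearMap.ker φ) = q * lam - 1 := by
    have h1 := LinearMap.finrank_range_add_finrank_ker φ
    rw [hr, finrank_top, Module.finrank_self, Module.finrank_pi, Fintype.card_fin] at h1
    omega
  calc rankC (ghCode H) ≤ Module.finrank F (LinearMap.ker φ) := Submodule.finrank_mono hle
    _ = q * lam - 1 := hker
end

section
/- Let H(q,λ) be a normalized generalized Hadamard matrix over 𝔽_q, with q > 3, or with q = 3 and λ a multiple of 3. Then rank(C_H) ≤ ⌊n/2⌋, where n = qλ. -/
open Finset

/-! ### The Witt gadget -/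

structure W2 (F : Type*) where
  x : F
  y : F

namespace W2
variable {F : Type*} [CommRing F]

def wadd (a b : W2 F) : W2 F := ⟨a.x + b.x, a.y + b.y + a.x * b.x⟩
def wneg (a : W2 F) : W2 F := ⟨-a.x, a.x * a.x - a.y⟩

instance : Zero (W2 F) := ⟨⟨0, 0⟩⟩
instance : Add (W2 F) := ⟨wadd⟩
instance : Neg (W2 F) := ⟨wneg⟩

instance : AddCommGroup (W2 F) where
  add := wadd
  zero := ⟨0, 0⟩
  neg := wneg
  nsmul := nsmulRec
  zsmul := zsmulRec
  add_assoc a b c := by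
    show wadd (wadd a b) c = wadd a (wadd b c)
    simp only [wadd, mk.injEq]; constructor <;> ring
  zero_add a := by show wadd ⟨0,0⟩ a = a; simp [wadd]
  add_zero a := by show wadd a ⟨0,0⟩ = a; simp [wadd]
  add_comm a b := by
    show wadd a b = wadd b a
    simp only [wadd, mk.injEq]; constructor <;> ring
  neg_add_cancel a := by
    show wadd (wneg a) a = ⟨0,0⟩
    simp only [wadd, wneg, mk.injEq]; constructor <;> ring

lemma add_def (a b : W2 F) : a + b = ⟨a.x + b.x, a.y + b.y + a.x * b.x⟩ := rfl
lemma zero_def : (0 : W2 F) = ⟨0, 0⟩ := rfl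

def V : F →+ W2 F where
  toFun c := ⟨0, c⟩
  map_zero' := rfl
  map_add' a b := by simp [add_def]

lemma V_injective : Function.Injective (V (F := F)) := by
  intro a b h
  simpa [V] using congrArg W2.y h

def L (c : F) : W2 F := ⟨c, 0⟩

def phi (γ : F) : W2 F →+ W2 F where
  toFun a := ⟨γ * a.x, γ * γ * a.y⟩
  map_zero' := by simp [zero_def]
  map_add' a b := by simp only [add_def, mk.injEq]; constructor <;> ring

def Xhom : W2 F →+ F where
  toFun a := a.x
  map_zero' := rfl
  map_add' a b := rfl

lemma key_identity (a b : F) : L a + L (-b) = L (a - b) + V (-(a * b)) := by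
  simp only [L, V, AddMonoidHom.coe_mk, ZeroHom.coe_mk, add_def, mk.injEq]
  constructor <;> ring

end W2

section Main

variable {F : Type*} [Field F] [Fintype F] [DecidableEq F]

/-- sums of compositions over a uniform function -/
lemma uniform_sum {n lam : ℕ} {a : Fin n → F}
    (ha : ∀ c : F, (Finset.univ.filter (fun s => a s = c)).card = lam)
    {M : Type*} [AddCommMonoid M] (G : F → M) :
    ∑ s, G (a s) = lam • ∑ c : F, G c := by
  rw [← Finset.sum_fiberwise Finset.univ a (fun s => G (a s)), Finset.smul_sum]
  refine Finset.sum_congr rfl fun c _ => ?_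
  have : ∀ s ∈ Finset.univ.filter (fun s => a s = c), G (a s) = G c := by
    intro s hs
    rw [(Finset.mem_filter.mp hs).2]
  rw [Finset.sum_congr rfl this, Finset.sum_const, ha c]

lemma exists_ne01 (h : 3 ≤ Fintype.card F) : ∃ γ : F, γ ≠ 0 ∧ γ ≠ 1 := by
  by_contra hc
  push_neg at hc
  have : (Finset.univ : Finset F) ⊆ {0, 1} := by
    intro x _
    rcases eq_or_ne x 0 with h0 | h0
    · simp [h0]
    · simp [hc x h0]
  have := Finset.card_le_card this
  simp only [Finset.card_univ] at this
  have h2 : ({0, 1} : Finset F).card ≤ 2 := Finset.card_insert_le _ _ |>.trans (by simp)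
  omega

lemma exists_sq_ne1 (h : 3 < Fintype.card F) : ∃ γ : F, γ ≠ 0 ∧ γ * γ ≠ 1 := by
  by_contra hc
  push_neg at hc
  have : (Finset.univ : Finset F) ⊆ {0, 1, -1} := by
    intro x _
    rcases eq_or_ne x 0 with h0 | h0
    · simp [h0]
    · have := hc x h0
      have hx : (x - 1) * (x + 1) = 0 := by ring_nf; rw [mul_comm] at this; linear_combination this
      rcases mul_eq_zero.mp hx with h1 | h1
      · simp [sub_eq_zero.mp h1]
      · have : x = -1 := by linear_combination h1
        simp [this]
  have := Finset.card_le_card this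
  simp only [Finset.card_univ] at this
  have h3 : ({0, 1, -1} : Finset F).card ≤ 3 :=
    (Finset.card_insert_le _ _).trans (by have := Finset.card_insert_le (1 : F) ({-1} : Finset F); rw [Finset.card_singleton] at this; omega)
  omega

lemma sum_reindex_mul (γ : F) (hγ : γ ≠ 0) {M : Type*} [AddCommMonoid M] (G : F → M) :
    ∑ c : F, G (γ * c) = ∑ c : F, G c := by
  exact Fintype.sum_bijective (Equiv.mulLeft₀ γ hγ) (Equiv.bijective _) _ _ (fun c => rfl)

lemma e1_zero (h : 3 ≤ Fintype.card F) : ∑ c : F, c = 0 := by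
  obtain ⟨γ, hγ0, hγ1⟩ := exists_ne01 (F := F) h
  have h1 : ∑ c : F, γ * c = ∑ c : F, c := sum_reindex_mul γ hγ0 id
  rw [← Finset.mul_sum] at h1
  have : (γ - 1) * ∑ c : F, c = 0 := by linear_combination h1
  rcases mul_eq_zero.mp this with h' | h'
  · exact absurd (by linear_combination h') hγ1
  · exact h'

end Main

section Main2

variable {F : Type*} [Field F] [Fintype F] [DecidableEq F]

lemma X_sum : (∑ c : F, W2.L c).x = ∑ c : F, c := by
  calc (∑ c : F, W2.L c).x = W2.Xhom (∑ c : F, W2.L c) := rfl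
    _ = ∑ c : F, W2.Xhom (W2.L c) := map_sum _ _ _
    _ = ∑ c : F, c := rfl

lemma phi_sum (γ : F) (hγ : γ ≠ 0) : W2.phi γ (∑ c : F, W2.L c) = ∑ c : F, W2.L c := by
  rw [map_sum]
  have h1 : ∀ c : F, W2.phi γ (W2.L c) = W2.L (γ * c) := by
    intro c; simp [W2.phi, W2.L]
  rw [Finset.sum_congr rfl fun c _ => h1 c]
  exact sum_reindex_mul γ hγ W2.L

lemma lamT_zero {q lam : ℕ} (hcard : Fintype.card F = q)
    (hcond : 3 < q ∨ (q = 3 ∧ 3 ∣ lam)) :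
    lam • (∑ c : F, W2.L c) = (0 : W2 F) := by
  have h3 : 3 ≤ Fintype.card F := by rcases hcond with h | ⟨h, _⟩ <;> omega
  have hx : (∑ c : F, W2.L c).x = 0 := by rw [X_sum]; exact e1_zero h3
  rcases hcond with h | ⟨h, hdvd⟩
  · obtain ⟨γ, hγ0, hγ2⟩ := exists_sq_ne1 (F := F) (hcard ▸ h)
    have hy : (∑ c : F, W2.L c).y = 0 := by
      have := congrArg W2.y (phi_sum γ hγ0)
      simp only [W2.phi, AddMonoidHom.coe_mk, ZeroHom.coe_mk] at this
      have h2 : (γ * γ - 1) * (∑ c : F, W2.L c).y = 0 := by linear_combination this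
      rcases mul_eq_zero.mp h2 with h' | h'
      · exact absurd (by linear_combination h') hγ2
      · exact h'
    have : (∑ c : F, W2.L c) = 0 := by
      have e := (∑ c : F, W2.L c)
      cases hT : (∑ c : F, W2.L c) with
      | mk a b =>
        rw [hT] at hx hy
        simp only at hx hy
        rw [hx, hy] at hT ⊢
        rfl
    rw [this, smul_zero]
  · have hTV : (∑ c : F, W2.L c) = W2.V ((∑ c : F, W2.L c).y) := by
      cases hT : (∑ c : F, W2.L c) with
      | mk a b =>
        rw [hT] at hx
        simp only at hx ⊢
        rw [hx] at hT ⊢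
        rfl
    rw [hTV, ← map_nsmul]
    have hlF : ((lam : ℕ) : F) = 0 := by
      obtain ⟨k, rfl⟩ := hdvd
      have h30 : ((3 : ℕ) : F) = 0 := by
        have := Nat.cast_card_eq_zero F
        rw [hcard, h] at this
        exact_mod_cast this
      rw [Nat.cast_mul, h30, zero_mul]
    rw [nsmul_eq_mul, hlF, zero_mul, map_zero]

lemma lam_sq_zero {q lam : ℕ} (hcard : Fintype.card F = q)
    (hcond : 3 < q ∨ (q = 3 ∧ 3 ∣ lam)) :
    ((lam : ℕ) : F) * (∑ c : F, c * c) = 0 := by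
  rcases hcond with h | ⟨h, hdvd⟩
  · obtain ⟨γ, hγ0, hγ2⟩ := exists_sq_ne1 (F := F) (hcard ▸ h)
    have h1 : ∑ c : F, (γ * c) * (γ * c) = ∑ c : F, c * c :=
      sum_reindex_mul γ hγ0 (fun c => c * c)
    have h2 : (γ * γ - 1) * ∑ c : F, c * c = 0 := by
      have : ∑ c : F, (γ * c) * (γ * c) = γ * γ * ∑ c : F, c * c := by
        rw [Finset.mul_sum]; exact Finset.sum_congr rfl fun c _ => by ring
      rw [this] at h1
      linear_combination h1
    rcases mul_eq_zero.mp h2 with h' | h'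
    · exact absurd (by linear_combination h') hγ2
    · rw [h', mul_zero]
  · obtain ⟨k, rfl⟩ := hdvd
    have h30 : ((3 : ℕ) : F) = 0 := by
      have := Nat.cast_card_eq_zero F
      rw [hcard, h] at this
      exact_mod_cast this
    rw [Nat.cast_mul, h30, zero_mul, zero_mul]

/-- Key lemma: the inner product of two rows vanishes. -/
lemma dot_zero {n lam : ℕ} {a b : Fin n → F}
    (ha : ∀ c : F, (Finset.univ.filter (fun s => a s = c)).card = lam)
    (hb : ∀ c : F, (Finset.univ.filter (fun s => b s = c)).card = lam)
    (hab : ∀ c : F, (Finset.univ.filter (fun s => a s - b s = c)).card = lam)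
    (hT : lam • (∑ c : F, W2.L c) = (0 : W2 F)) :
    ∑ s, a s * b s = 0 := by
  have h1 : ∑ s, (W2.L (a s) + W2.L (-(b s))) =
      ∑ s, (W2.L (a s - b s) + W2.V (-(a s * b s))) :=
    Finset.sum_congr rfl fun s _ => W2.key_identity (a s) (b s)
  rw [Finset.sum_add_distrib, Finset.sum_add_distrib] at h1
  rw [uniform_sum ha W2.L, uniform_sum hb (fun c => W2.L (-c)),
    uniform_sum hab W2.L] at h1
  have hneg : ∑ c : F, W2.L (-c) = ∑ c : F, W2.L c :=
    Fintype.sum_bijective (Equiv.neg F) (Equiv.bijective _) _ _ (fun c => rfl)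
  rw [hneg, hT] at h1
  have h2 : ∑ s, W2.V (-(a s * b s)) = 0 := by
    simpa using h1.symm
  have h3 : ∑ s, -(a s * b s) = 0 := by
    apply W2.V_injective
    rw [map_sum, map_zero, h2]
  have h4 : -∑ s, a s * b s = 0 := by rw [← h3]; simp
  exact neg_eq_zero.mp h4

end Main2

section Matrix

variable {q lam : ℕ} {F : Type*} [Field F] [Fintype F] [DecidableEq F]
  (hcard : Fintype.card F = q) (hlam : 0 < lam)
  (hcond : 3 < q ∨ (q = 3 ∧ 3 ∣ lam))
  (H : Matrix (Fin (q * lam)) (Fin (q * lam)) F)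
  (hGH : IsGH lam H) (hnorm : Normalized H)

include hcard hlam hcond hGH hnorm

lemma hn_pos : 0 < q * lam := by
  have : 3 ≤ q := by rcases hcond with h | ⟨h, _⟩ <;> omega
  positivity

lemma row_uniform (i : Fin (q * lam)) (hi : i.val ≠ 0) :
    ∀ c : F, (Finset.univ.filter (fun s => H i s = c)).card = lam := by
  intro c
  have hz : (0 : ℕ) < q * lam := hn_pos hcard hlam hcond H hGH hnorm
  set z : Fin (q * lam) := ⟨0, hz⟩ with hzdef
  have hiz : i ≠ z := fun h => hi (by rw [h])
  have h := hGH i z hiz c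
  have he : ∀ s, H i s - H z s = H i s := fun s => by
    rw [hnorm z s (Or.inl rfl), sub_zero]
  simpa only [he] using h

lemma row_sum_zero (i : Fin (q * lam)) : ∑ s, H i s = 0 := by
  by_cases hi : i.val = 0
  · rw [Finset.sum_congr rfl fun s _ => hnorm i s (Or.inl hi)]
    simp
  · rw [uniform_sum (row_uniform hcard hlam hcond H hGH hnorm i hi) (fun c => c)]
    have h3 : 3 ≤ Fintype.card F := by rcases hcond with h | ⟨h, _⟩ <;> omega
    rw [e1_zero h3, smul_zero]

lemma row_dot_zero (i j : Fin (q * lam)) : ∑ s, H i s * H j s = 0 := by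
  by_cases hi : i.val = 0
  · rw [Finset.sum_congr rfl fun s _ => by rw [hnorm i s (Or.inl hi), zero_mul]]
    simp
  by_cases hj : j.val = 0
  · rw [Finset.sum_congr rfl fun s _ => by rw [hnorm j s (Or.inl hj), mul_zero]]
    simp
  by_cases hij : i = j
  · subst hij
    rw [uniform_sum (row_uniform hcard hlam hcond H hGH hnorm i hi) (fun c => c * c)]
    rw [nsmul_eq_mul]
    exact lam_sq_zero hcard hcond
  · exact dot_zero (row_uniform hcard hlam hcond H hGH hnorm i hi)
      (row_uniform hcard hlam hcond H hGH hnorm j hj)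
      (hGH i j hij) (lamT_zero hcard hcond)

lemma gh_dot_zero : ∀ v ∈ ghCode H, ∀ w ∈ ghCode H, ∑ s, v s * w s = 0 := by
  rintro v ⟨α, i, rfl⟩ w ⟨β, j, rfl⟩
  have expand : ∀ s, (H i s + α) * (H j s + β) =
      H i s * H j s + β * H i s + α * H j s + α * β := fun s => by ring
  rw [Finset.sum_congr rfl fun s _ => expand s]
  rw [Finset.sum_add_distrib, Finset.sum_add_distrib, Finset.sum_add_distrib,
    ← Finset.mul_sum, ← Finset.mul_sum,
    row_dot_zero hcard hlam hcond H hGH hnorm,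
    row_sum_zero hcard hlam hcond H hGH hnorm,
    row_sum_zero hcard hlam hcond H hGH hnorm,
    Finset.sum_const, Finset.card_univ, Fintype.card_fin]
  have hq0 : ((q * lam : ℕ) : F) = 0 := by
    rw [Nat.cast_mul, ← hcard, Nat.cast_card_eq_zero, zero_mul]
  rw [nsmul_eq_mul, hq0]
  simp

end Matrix

section Final

variable {F : Type*} [Field F] [Fintype F] [DecidableEq F] {n : ℕ}

noncomputable def dotB : LinearMap.BilinForm F (Fin n → F) :=
  LinearMap.mk₂ F (fun v w => ∑ s, v s * w s)
    (fun v v' w => by simp [add_mul, Finset.sum_add_distrib])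
    (fun a v w => by simp [Finset.mul_sum, mul_assoc])
    (fun v w w' => by simp [mul_add, Finset.sum_add_distrib])
    (fun a v w => by
      simp only [Pi.smul_apply, smul_eq_mul, Finset.mul_sum]
      exact Finset.sum_congr rfl fun s _ => by ring)

lemma dotB_apply (v w : Fin n → F) : dotB v w = ∑ s, v s * w s := rfl

lemma dotB_refl : (dotB (F := F) (n := n)).IsRefl := by
  intro v w h
  rw [dotB_apply] at h ⊢
  rw [Finset.sum_congr rfl fun s _ => mul_comm (w s) (v s)]
  exact h

lemma dotB_nondegenerate : (dotB (F := F) (n := n)).Nondegenerate := by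
  refine (LinearMap.IsRefl.nondegenerate_iff_separatingLeft (B := dotB (F := F) (n := n)) dotB_refl).mpr ?_
  intro v h
  funext s
  have := h (Pi.single s 1)
  rw [dotB_apply] at this
  simpa [Pi.single_apply, mul_ite, Finset.sum_ite_eq'] using this

theorem rank_le_half (C : Set (Fin n → F))
    (horth : ∀ v ∈ C, ∀ w ∈ C, ∑ s, v s * w s = 0) :
    rankC C ≤ n / 2 := by
  classical
  set W := Submodule.span F C with hW
  have hle : W ≤ (dotB (F := F) (n := n)).orthogonal W := by
    rw [hW, Submodule.span_le]
    intro v hv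
    rw [SetLike.mem_coe, LinearMap.BilinForm.mem_orthogonal_iff]
    intro u hu
    induction hu using Submodule.span_induction with
    | mem x hx => exact horth x hx v hv
    | zero => simp [LinearMap.BilinForm.IsOrtho]
    | add x y _ _ hx hy =>
        simp only [LinearMap.BilinForm.IsOrtho, map_add, LinearMap.add_apply] at hx hy ⊢
        rw [hx, hy, add_zero]
    | smul a x _ hx =>
        simp only [LinearMap.BilinForm.IsOrtho, map_smul, LinearMap.smul_apply,
          smul_eq_mul] at hx ⊢
        rw [hx, mul_zero]
  have hdim := LinearMap.BilinForm.finrank_orthogonal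
    (dotB_nondegenerate (F := F) (n := n)) W
  have hmono : Module.finrank F W ≤ Module.finrank F ((dotB (F := F) (n := n)).orthogonal W) :=
    Submodule.finrank_mono hle
  have htot : Module.finrank F (Fin n → F) = n := Module.finrank_fin_fun F
  have hlefr : Module.finrank F W ≤ n := by
    have := Submodule.finrank_le W
    rwa [htot] at this
  rw [hdim, htot] at hmono
  have : rankC C = Module.finrank F W := rfl
  omega

end Final

theorem stmt16 {q lam : ℕ} {F : Type*} [Field F] [Fintype F] [DecidableEq F]
    (hcard : Fintype.card F = q) (hlam : 0 < lam)
    (hcond : 3 < q ∨ (q = 3 ∧ 3 ∣ lam))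
    (H : Matrix (Fin (q * lam)) (Fin (q * lam)) F)
    (hGH : IsGH lam H) (hnorm : Normalized H) :
    rankC (ghCode H) ≤ q * lam / 2 :=
  rank_le_half (ghCode H) (gh_dot_zero hcard hlam hcond H hGH hnorm)
end
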